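/- Let d ≥ 1, τ < T, and let f₁, f₂ : [τ,T] × ℝ^d → ℝ^d be jointly continuous. Suppose that for j = 1, 2 there are exponents p_i^j ≥ 2 (i = 1,…,d) and constants α^j, C₁^j, C₂^j > 0 such that for all t ∈ [τ,T] and all u ∈ ℝ^d: ∑_{i=1}^d |f_j^i(t,u)|^{p_i^j/(p_i^j−1)} ≤ C₁^j (1 + ∑_{i=1}^d |u^i|^{p_i^j}) and (f_j(t,u), u) ≥ α^j ∑_{i=1}^d |u^i|^{p_i^j} − C₂^j. If moreover f₁^i(t,u) ≥ f₂^i(t,u) for all t ∈ [τ,T], all u ∈ ℝ^d and all i, then p_i^1 = p_i^2 for every i = 1,…,d. -/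

import Mathlib

open Filter Real Finset

lemma aux_limit (α K C a b : ℝ) (hα : 0 < α) (ha : 0 < a)
    (h : ∀ s : ℝ, 1 ≤ s → α * s ^ a ≤ K * s ^ b + C) : a ≤ b := by
  by_contra hab
  push_neg at hab
  have t1 : Tendsto (fun s : ℝ => s ^ (b - a)) atTop (nhds 0) := by
    simpa [neg_sub] using tendsto_rpow_neg_atTop (show (0:ℝ) < a - b by linarith)
  have t2 : Tendsto (fun s : ℝ => s ^ (-a)) atTop (nhds 0) := tendsto_rpow_neg_atTop ha
  have h0 : Tendsto (fun s : ℝ => K * s ^ (b - a) + C * s ^ (-a)) atTop (nhds 0) := by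
    have := (t1.const_mul K).add (t2.const_mul C)
    simpa using this
  have h2 : ∀ᶠ s : ℝ in atTop, α ≤ K * s ^ (b - a) + C * s ^ (-a) := by
    filter_upwards [eventually_ge_atTop (1 : ℝ)] with s hs
    have hs0 : (0:ℝ) < s := by linarith
    have e1 : s ^ a * s ^ (-a) = 1 := by rw [← Real.rpow_add hs0]; simp
    have e2 : s ^ b * s ^ (-a) = s ^ (b - a) := by rw [← Real.rpow_add hs0]; ring_nf
    calc α = (α * s ^ a) * s ^ (-a) := by rw [mul_assoc, e1, mul_one]
      _ ≤ (K * s ^ b + C) * s ^ (-a) :=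
          mul_le_mul_of_nonneg_right (h s hs) (Real.rpow_pos_of_pos hs0 _).le
      _ = K * (s ^ b * s ^ (-a)) + C * s ^ (-a) := by ring
      _ = K * s ^ (b - a) + C * s ^ (-a) := by rw [e2]
  have := ge_of_tendsto h0 h2
  linarith

lemma one_dir {d : ℕ} (i : Fin d)
    (g₁ g₂ : EuclideanSpace ℝ (Fin d) → EuclideanSpace ℝ (Fin d))
    (p₁ p₂ : Fin d → ℝ) (hp₁ : ∀ j, 2 ≤ p₁ j) (hp₂ : ∀ j, 2 ≤ p₂ j)
    (α C₁ C₂ : ℝ) (hα : 0 < α) (hC₁ : 0 < C₁)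
    (hg : ∀ u, ∑ j, |g₁ u j| ^ (p₁ j / (p₁ j - 1)) ≤ C₁ * (1 + ∑ j, |u j| ^ p₁ j))
    (hd : ∀ u, α * (∑ j, |u j| ^ p₂ j) - C₂ ≤ ∑ j, g₂ u j * u j)
    (hc : ∀ u, g₂ u i ≤ g₁ u i) : p₂ i ≤ p₁ i := by
  set a := p₂ i with ha
  set b := p₁ i with hb
  have hb2 : 2 ≤ b := hp₁ i
  have ha2 : 2 ≤ a := hp₂ i
  have hb0 : (0:ℝ) < b := by linarith
  have hb1 : (0:ℝ) < b - 1 := by linarith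
  set r : ℝ := (b - 1) / b with hr
  refine aux_limit α ((2 * C₁) ^ r) C₂ a b hα (by linarith) ?_
  intro s hs
  have hs0 : (0:ℝ) < s := by linarith
  set u : EuclideanSpace ℝ (Fin d) := EuclideanSpace.single i s with hu
  have huj : ∀ j, u j = if j = i then s else 0 := fun j => by
    simp [hu, EuclideanSpace.single_apply]
  -- sums over u
  have sum_pow : ∀ (p : Fin d → ℝ), (∀ j, 2 ≤ p j) → ∑ j, |u j| ^ p j = s ^ p i := by
    intro p hp
    rw [Finset.sum_eq_single_of_mem i (Finset.mem_univ i)]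
    · rw [huj i, if_pos rfl, abs_of_pos hs0]
    · intro j _ hj
      rw [huj j, if_neg hj, abs_zero, Real.zero_rpow (by have := hp j; linarith)]
  have sum_dot : ∑ j, g₂ u j * u j = g₂ u i * s := by
    rw [Finset.sum_eq_single_of_mem i (Finset.mem_univ i)]
    · rw [huj i, if_pos rfl]
    · intro j _ hj; rw [huj j, if_neg hj, mul_zero]
  -- dissipativity lower bound
  have hlow : α * s ^ a - C₂ ≤ g₂ u i * s := by
    have := hd u
    rwa [sum_pow p₂ hp₂, sum_dot] at this
  -- growth upper bound on |g₁ u i|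
  have hgrow : |g₁ u i| ^ (b / (b - 1)) ≤ C₁ * (1 + s ^ b) := by
    have h1 : |g₁ u i| ^ (p₁ i / (p₁ i - 1)) ≤ ∑ j, |g₁ u j| ^ (p₁ j / (p₁ j - 1)) :=
      Finset.single_le_sum (f := fun j => |g₁ u j| ^ (p₁ j / (p₁ j - 1)))
        (fun j _ => Real.rpow_nonneg (abs_nonneg _) _) (Finset.mem_univ i)
    have h2 := hg u
    rw [sum_pow p₁ hp₁] at h2
    exact le_trans h1 h2
  have habs : |g₁ u i| ≤ (C₁ * (1 + s ^ b)) ^ r := by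
    have hq : b / (b - 1) * r = 1 := by
      field_simp [hr]
      rw [hr]; field_simp [hb0.ne']
    have := Real.rpow_le_rpow (Real.rpow_nonneg (abs_nonneg _) _) hgrow
      (le_of_lt (div_pos hb1 hb0))
    rwa [← Real.rpow_mul (abs_nonneg _), hq, Real.rpow_one] at this
  -- simplify the bound
  have hsb1 : (1:ℝ) ≤ s ^ b := Real.one_le_rpow hs hb0.le
  have hbound : (C₁ * (1 + s ^ b)) ^ r ≤ (2 * C₁) ^ r * s ^ (b - 1) := by
    have h1 : C₁ * (1 + s ^ b) ≤ 2 * C₁ * s ^ b := by nlinarith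
    have h2 : (C₁ * (1 + s ^ b)) ^ r ≤ (2 * C₁ * s ^ b) ^ r :=
      Real.rpow_le_rpow (by positivity) h1 (le_of_lt (div_pos hb1 hb0))
    have h3 : (2 * C₁ * s ^ b) ^ r = (2 * C₁) ^ r * (s ^ b) ^ r :=
      Real.mul_rpow (by positivity) (by positivity)
    have h4 : (s ^ b) ^ r = s ^ (b - 1) := by
      rw [← Real.rpow_mul hs0.le]
      congr 1
      field_simp [hr]
      rw [hr]; field_simp [hb0.ne']
    rw [h3, h4] at h2
    exact h2
  -- combine
  have hfin : g₂ u i * s ≤ (2 * C₁) ^ r * s ^ b := by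
    have h1 : g₂ u i ≤ (2 * C₁) ^ r * s ^ (b - 1) :=
      le_trans (hc u) (le_trans (le_abs_self _) (le_trans habs hbound))
    have h2 : g₂ u i * s ≤ (2 * C₁) ^ r * s ^ (b - 1) * s :=
      mul_le_mul_of_nonneg_right h1 hs0.le
    have h3 : s ^ (b - 1) * s = s ^ b := by
      rw [← Real.rpow_add_one hs0.ne' (b - 1)]; ring_nf
    calc g₂ u i * s ≤ (2 * C₁) ^ r * s ^ (b - 1) * s := h2
      _ = (2 * C₁) ^ r * (s ^ (b-1) * s) := by ring
      _ = (2 * C₁) ^ r * s ^ b := by rw [h3]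
  linarith

/-- If `f₁, f₂ : [τ,T] × ℝ^d → ℝ^d` are jointly continuous, each satisfying
the growth and dissipativity conditions with exponents `p₁ i, p₂ i ≥ 2` and positive
constants, and `f₁^i(t,u) ≥ f₂^i(t,u)` everywhere, then `p₁ i = p₂ i` for all `i`. -/
theorem exponents_equal_of_comparison
    (d : ℕ) (hd : 1 ≤ d) (τ T : ℝ) (hτT : τ < T)
    (f₁ f₂ : ℝ → EuclideanSpace ℝ (Fin d) → EuclideanSpace ℝ (Fin d))
    (hf₁cont : ContinuousOn (Function.uncurry f₁) (Set.Icc τ T ×ˢ Set.univ))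
    (hf₂cont : ContinuousOn (Function.uncurry f₂) (Set.Icc τ T ×ˢ Set.univ))
    (p₁ p₂ : Fin d → ℝ) (hp₁ : ∀ i, 2 ≤ p₁ i) (hp₂ : ∀ i, 2 ≤ p₂ i)
    (α₁ C₁₁ C₂₁ α₂ C₁₂ C₂₂ : ℝ)
    (hα₁ : 0 < α₁) (hC₁₁ : 0 < C₁₁) (hC₂₁ : 0 < C₂₁)
    (hα₂ : 0 < α₂) (hC₁₂ : 0 < C₁₂) (hC₂₂ : 0 < C₂₂)
    (hgrowth₁ : ∀ t ∈ Set.Icc τ T, ∀ u : EuclideanSpace ℝ (Fin d),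
      ∑ i, |f₁ t u i| ^ (p₁ i / (p₁ i - 1)) ≤ C₁₁ * (1 + ∑ i, |u i| ^ (p₁ i)))
    (hgrowth₂ : ∀ t ∈ Set.Icc τ T, ∀ u : EuclideanSpace ℝ (Fin d),
      ∑ i, |f₂ t u i| ^ (p₂ i / (p₂ i - 1)) ≤ C₁₂ * (1 + ∑ i, |u i| ^ (p₂ i)))
    (hdiss₁ : ∀ t ∈ Set.Icc τ T, ∀ u : EuclideanSpace ℝ (Fin d),
      α₁ * (∑ i, |u i| ^ (p₁ i)) - C₂₁ ≤ ∑ i, f₁ t u i * u i)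
    (hdiss₂ : ∀ t ∈ Set.Icc τ T, ∀ u : EuclideanSpace ℝ (Fin d),
      α₂ * (∑ i, |u i| ^ (p₂ i)) - C₂₂ ≤ ∑ i, f₂ t u i * u i)
    (hcomp : ∀ t ∈ Set.Icc τ T, ∀ u : EuclideanSpace ℝ (Fin d), ∀ i, f₂ t u i ≤ f₁ t u i) :
    ∀ i, p₁ i = p₂ i := by
  intro i
  have ht : τ ∈ Set.Icc τ T := ⟨le_refl τ, hτT.le⟩
  -- direction 1: p₂ i ≤ p₁ i
  have h1 : p₂ i ≤ p₁ i :=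
    one_dir i (f₁ τ) (f₂ τ) p₁ p₂ hp₁ hp₂ α₂ C₁₁ C₂₂ hα₂ hC₁₁
      (fun u => hgrowth₁ τ ht u) (fun u => hdiss₂ τ ht u) (fun u => hcomp τ ht u i)
  -- direction 2: p₁ i ≤ p₂ i, via g(u) := -f(τ, -u)
  have hneg : ∀ (g : ℝ → EuclideanSpace ℝ (Fin d) → EuclideanSpace ℝ (Fin d))
      (u : EuclideanSpace ℝ (Fin d)) (j : Fin d), (-(g τ (-u))) j = -(g τ (-u) j) := by
    intro g u j; rfl
  have hnu : ∀ (u : EuclideanSpace ℝ (Fin d)) (j : Fin d), (-u) j = -(u j) := by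
    intro u j; rfl
  have h2 : p₁ i ≤ p₂ i := by
    refine one_dir i (fun u => -(f₂ τ (-u))) (fun u => -(f₁ τ (-u))) p₂ p₁ hp₂ hp₁
      α₁ C₁₂ C₂₁ hα₁ hC₁₂ ?_ ?_ ?_
    · intro u
      have := hgrowth₂ τ ht (-u)
      simpa [hneg, hnu, abs_neg] using this
    · intro u
      have := hdiss₁ τ ht (-u)
      have e : ∑ j, f₁ τ (-u) j * (-u) j = ∑ j, (-(f₁ τ (-u))) j * u j := by
        apply Finset.sum_congr rfl
        intro j _
        rw [hneg, hnu]; ring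
      rw [e] at this
      simpa [hnu, abs_neg] using this
    · intro u
      show (-(f₁ τ (-u))) i ≤ (-(f₂ τ (-u))) i
      rw [hneg, hneg]
      exact neg_le_neg (hcomp τ ht (-u) i)
  linarith
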